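/- Let $N \ge 3$, $\Delta x > 0$, $\gamma \in \mathbb{R}$, and let $D_1 \in \mathbb{R}^{N\times N}$ be the periodic central-difference matrix with entries $(D_1)_{i,i+1} = \frac{1}{2\Delta x}$, $(D_1)_{i,i-1} = -\frac{1}{2\Delta x}$ (indices modulo $N$), all other entries zero. Let $\mathbf{u} : \mathbb{R} \to \mathbb{R}^N$ be differentiable and solve the semi-discrete damped Burger's equation $\dot{\mathbf{u}}(t) = -\frac{1}{2} D_1 \nabla H(\mathbf{u}(t)) - 2\gamma\, \mathbf{u}(t)$, where $H(\mathbf{u}) = \frac{1}{3}\sum_{j=1}^{N}(u^j)^3$ so that $\nabla H(\mathbf{u})$ is the componentwise square of $\mathbf{u}$. Then the mass $M(\mathbf{u}) = \sum_{k=1}^{N} u^k$ is a conformal invariant: for all $t \ge 0$, $M(\mathbf{u}(t)) = e^{-2\gamma t} M(\mathbf{u}(0))$. -/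

import Mathlib

open Matrix

/-- For a differentiable solution `u` of the semi-discrete damped Burger's
equation `u̇ = -½ D₁ ∇H(u) - 2γ u` with `H(u) = ⅓ ∑ (uʲ)³` (so `∇H(u)` is the componentwise
square of `u`) and `D₁` the periodic central-difference matrix, the mass `M(u) = ∑ uᵏ` is a
conformal invariant: `M(u(t)) = e^{-2γt} M(u(0))` for all `t ≥ 0`. -/
theorem damped_burgers_mass_dissipation
    {N : ℕ} [NeZero N] (hN : 3 ≤ N) (Δx : ℝ) (hΔx : 0 < Δx) (γ : ℝ)
    (D₁ : Matrix (Fin N) (Fin N) ℝ)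
    (hD₁ : ∀ i j : Fin N, D₁ i j =
      if j = i + 1 then 1 / (2 * Δx) else if j = i - 1 then -(1 / (2 * Δx)) else 0)
    (u : ℝ → (Fin N → ℝ))
    (hu : ∀ t, HasDerivAt u
      (-((1:ℝ)/2) • D₁.mulVec (fun k => u t k ^ 2) - (2 * γ) • u t) t) :
    ∀ t, 0 ≤ t → (∑ k, u t k) = Real.exp (-(2 * γ * t)) * ∑ k, u 0 k := by
  -- column sums of D₁ vanish
  have hne : ∀ j : Fin N, (j - 1 : Fin N) ≠ j + 1 := by
    intro j h
    have h3 : j = j + (1 + 1) := by rw [← add_assoc]; exact sub_eq_iff_eq_add.mp h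
    have h2 : (1 : Fin N) + 1 = 0 := (left_eq_add.mp h3).symm ▸ rfl
    have v1 : (1 : Fin N).val = 1 := by
      rw [Fin.val_one']; exact Nat.mod_eq_of_lt (by omega)
    have hv := congrArg Fin.val h2
    simp [Fin.add_def, v1, Nat.mod_eq_of_lt (show 1 + 1 < N by omega)] at hv
  have colsum : ∀ j : Fin N, ∑ i, D₁ i j = 0 := by
    intro j
    have key : ∀ i : Fin N, D₁ i j =
        (if i = j - 1 then 1 / (2 * Δx) else 0) +
        (if i = j + 1 then -(1 / (2 * Δx)) else 0) := by
      intro i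
      rw [hD₁]
      rcases eq_or_ne i (j - 1) with h | h
      · subst h
        simp [sub_add_cancel, (hne j).symm, hne j]
      · have h1 : j ≠ i + 1 := by
          intro hh; apply h; rw [hh]; exact (add_sub_cancel_right i 1).symm
        rcases eq_or_ne i (j + 1) with h2 | h2
        · subst h2
          simp [h1, h, add_sub_cancel_right]
        · have h3 : j ≠ i - 1 := by
            intro hh; apply h2; rw [hh]; exact (sub_add_cancel i 1).symm
          simp [h1, h3, h, h2]
    rw [Finset.sum_congr rfl fun i _ => key i, Finset.sum_add_distrib]
    simp
  have mulsum : ∀ t : ℝ, ∑ i, D₁.mulVec (fun k => u t k ^ 2) i = 0 := by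
    intro t
    simp only [mulVec, dotProduct]
    rw [Finset.sum_comm]
    apply Finset.sum_eq_zero
    intro j _
    rw [← Finset.sum_mul, colsum, zero_mul]
  -- derivative of mass
  have hS : ∀ t : ℝ, HasDerivAt (fun t => ∑ k, u t k) (-(2 * γ) * ∑ k, u t k) t := by
    intro t
    have h1 : ∀ k : Fin N, HasDerivAt (fun t => u t k)
        ((-((1:ℝ)/2) • D₁.mulVec (fun k => u t k ^ 2) - (2 * γ) • u t) k) t :=
      fun k => (hasDerivAt_pi.mp (hu t)) k
    have := HasDerivAt.fun_sum (fun k (_ : k ∈ Finset.univ) => h1 k)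
    refine this.congr_deriv ?_
    simp only [Pi.sub_apply, Pi.smul_apply, smul_eq_mul, Finset.sum_sub_distrib,
      ← Finset.mul_sum]
    rw [mulsum t]
    ring
  -- g t = exp(2γt) * S t is constant
  have hg : ∀ t : ℝ, HasDerivAt (fun t => Real.exp (2 * γ * t) * ∑ k, u t k) 0 t := by
    intro t
    have he : HasDerivAt (fun t => Real.exp (2 * γ * t)) (2 * γ * Real.exp (2 * γ * t)) t := by
      have := (hasDerivAt_id t).const_mul (2 * γ)
      have := (this.exp)
      simpa [mul_comm] using this
    have := he.fun_mul (hS t)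
    refine this.congr_deriv ?_
    ring
  intro t _
  have hconst : Real.exp (2 * γ * t) * ∑ k, u t k
      = Real.exp (2 * γ * 0) * ∑ k, u 0 k :=
    is_const_of_deriv_eq_zero (fun x => (hg x).differentiableAt)
      (fun x => (hg x).deriv) t 0
  have hexp : Real.exp (2 * γ * 0) = 1 := by norm_num
  rw [hexp, one_mul] at hconst
  have : (∑ k, u t k) = Real.exp (-(2 * γ * t)) * (Real.exp (2 * γ * t) * ∑ k, u t k) := by
    rw [← mul_assoc, ← Real.exp_add]; simp
  rw [this, hconst]
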